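/- Let $\overline{S} \in \mathbb{S}^n_+$ and $\overline{X} \in \mathbb{S}^n_+$ satisfy $\langle \overline{X}, \overline{S}\rangle = 0$ (equivalently, $-\overline{X} \in \partial\delta_{\mathbb{S}^n_+}(\overline{S})$). Then the subdifferential mapping $\partial\delta_{\mathbb{S}^n_-}(\cdot) = \mathcal{N}_{\mathbb{S}^n_-}(\cdot)$ is metrically subregular at $-\overline{S}$ for $\overline{X}$: there exist $\kappa > 0$ and a neighborhood $\mathcal{U}$ of $\overline{S}$ such that for all $S \in \mathbb{S}^n_+ \cap \mathcal{U}$, $0 \ge \langle \overline{X}, \overline{S} - S\rangle + \kappa\,\mathrm{dist}^2(-S, \mathcal{N}_{\mathbb{S}^n_+}(\overline{X}))$. -/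

import Mathlib

open Matrix
attribute [local instance] Matrix.frobeniusNormedAddCommGroup

lemma myPsdTraceNonneg {n : ℕ} {A : Matrix (Fin n) (Fin n) ℝ} (hA : A.PosSemidef) :
    0 ≤ A.trace := by
  rw [Matrix.trace]
  refine Finset.sum_nonneg fun i _ => ?_
  exact hA.diag_nonneg

lemma myTraceMulNonneg {n : ℕ} {A B : Matrix (Fin n) (Fin n) ℝ}
    (hA : A.PosSemidef) (hB : B.PosSemidef) : 0 ≤ (A * B).trace := by
  obtain ⟨C, hC⟩ : ∃ C : Matrix (Fin n) (Fin n) ℝ, A = star C * C := by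
    open scoped MatrixOrder in exact CStarAlgebra.nonneg_iff_eq_star_mul_self.mp hA.nonneg
  have h2 : (A * B).trace = (C * B * Cᴴ).trace := by
    rw [hC, Matrix.trace_mul_cycle, Matrix.star_eq_conjTranspose, Matrix.trace_mul_cycle]
  rw [h2]
  have h3 : (C * B * Cᴴ).PosSemidef := hB.mul_mul_conjTranspose_same _
  exact myPsdTraceNonneg h3

lemma myNormSq {n : ℕ} (A : Matrix (Fin n) (Fin n) ℝ) : ‖A‖ ^ 2 = (Aᵀ * A).trace := by
  rw [Matrix.frobenius_norm_def, ← Real.rpow_natCast _ 2, ← Real.rpow_mul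
    (Finset.sum_nonneg fun i _ => Finset.sum_nonneg fun j _ => by positivity)]
  norm_num
  rw [Matrix.trace]
  rw [Finset.sum_comm]
  refine Finset.sum_congr rfl fun i _ => ?_
  simp [Matrix.mul_apply, Matrix.diag, Real.rpow_two, sq_abs]
  exact Finset.sum_congr rfl fun j _ => by rw [← Real.rpow_natCast _ 2]; norm_num [sq_abs, sq]

section conj
variable {n : ℕ} {U : Matrix (Fin n) (Fin n) ℝ}

lemma myConjMul (hU : star U * U = 1) (d e : Fin n → ℝ) :
    (U * diagonal d * star U) * (U * diagonal e * star U)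
      = U * diagonal (fun i => d i * e i) * star U := by
  have h : diagonal d * (star U * U) * diagonal e = diagonal fun i => d i * e i := by
    rw [hU, Matrix.mul_one, Matrix.diagonal_mul_diagonal]
  calc (U * diagonal d * star U) * (U * diagonal e * star U)
      = U * (diagonal d * (star U * U) * diagonal e) * star U := by
        simp only [Matrix.mul_assoc]
    _ = U * diagonal (fun i => d i * e i) * star U := by rw [h]

lemma myConjTrace (hU : star U * U = 1) (d : Fin n → ℝ) :
    (U * diagonal d * star U).trace = ∑ i, d i := by
  rw [Matrix.trace_mul_cycle, hU, Matrix.one_mul, Matrix.trace_diagonal]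

lemma myConjPsd (d : Fin n → ℝ) (hd : ∀ i, 0 ≤ d i) :
    (U * diagonal d * star U).PosSemidef := by
  have := (Matrix.PosSemidef.diagonal (R := ℝ) (n := Fin n) hd).mul_mul_conjTranspose_same U
  simpa [Matrix.star_eq_conjTranspose] using this

lemma myConjLin (hU : star U * U = 1) (d e : Fin n → ℝ) (a b : ℝ) :
    a • (U * diagonal d * star U) - b • (U * diagonal e * star U)
      = U * diagonal (fun i => a * d i - b * e i) * star U := by
  have h : diagonal (fun i => a * d i - b * e i)
      = a • diagonal d - b • diagonal e := by
    rw [← Matrix.diagonal_smul, ← Matrix.diagonal_smul, ← Matrix.diagonal_sub]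
    congr 1
  rw [h, Matrix.mul_sub, Matrix.sub_mul]
  simp [Matrix.mul_smul, Matrix.smul_mul]

end conj

lemma myExistsProj {n : ℕ} {X : Matrix (Fin n) (Fin n) ℝ} (hX : X.PosSemidef) :
    ∃ l > (0:ℝ), ∃ Q : Matrix (Fin n) (Fin n) ℝ, Q.PosSemidef ∧ Q * Q = Q ∧ Q * X = X ∧
      (X - l • Q).PosSemidef := by
  classical
  have hH := hX.1
  set ev := hH.eigenvalues with hev
  set U : Matrix (Fin n) (Fin n) ℝ := (hH.eigenvectorUnitary : Matrix (Fin n) (Fin n) ℝ) with hUdef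
  have hU : star U * U = 1 := ((Unitary.mem_iff).1 hH.eigenvectorUnitary.2).1
  have hspec : X = U * diagonal ev * star U := by
    have := hH.spectral_theorem
    simpa [RCLike.ofReal_real_eq_id] using this
  have hevnn : ∀ i, 0 ≤ ev i := hX.eigenvalues_nonneg
  set s := Finset.univ.filter (fun i => ev i ≠ 0) with hs
  set l : ℝ := if h : s.Nonempty then s.inf' h ev else 1 with hldef
  have hl : 0 < l := by
    rw [hldef]
    split
    · rename_i h
      rw [Finset.lt_inf'_iff]
      intro i hi
      exact (hevnn i).lt_of_ne' (by simpa [hs] using hi)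
    · exact one_pos
  have hle : ∀ i, ev i ≠ 0 → l ≤ ev i := by
    intro i hi
    have hmem : i ∈ s := by simp [hs, hi]
    rw [hldef, dif_pos ⟨i, hmem⟩]
    exact Finset.inf'_le _ hmem
  set f : Fin n → ℝ := fun i => if ev i = 0 then 0 else 1 with hf
  refine ⟨l, hl, U * diagonal f * star U, ?_, ?_, ?_, ?_⟩
  · exact myConjPsd f fun i => by by_cases h : ev i = 0 <;> simp [hf, h]
  · have hff : (fun i => f i * f i) = f := funext fun i => by
      by_cases h : ev i = 0 <;> simp [hf, h]
    rw [myConjMul hU, hff]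
  · have hfe : (fun i => f i * ev i) = ev := funext fun i => by
      by_cases h : ev i = 0 <;> simp [hf, h]
    rw [hspec, myConjMul hU, hfe]
  · have heq : X - l • (U * diagonal f * star U)
        = U * diagonal (fun i => 1 * ev i - l * f i) * star U := by
      calc X - l • (U * diagonal f * star U)
          = 1 • (U * diagonal ev * star U) - l • (U * diagonal f * star U) := by
            rw [one_smul, ← hspec]
        _ = U * diagonal (fun i => 1 * ev i - l * f i) * star U := myConjLin hU ev f 1 l
    rw [heq]
    refine myConjPsd _ fun i => ?_
    by_cases h : ev i = 0
    · simp [hf, h]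
    · simp only [hf, if_neg h, mul_one, one_mul]
      linarith [hle i h]

lemma mySqLe {n : ℕ} {S : Matrix (Fin n) (Fin n) ℝ} (hS : S.PosSemidef) :
    (S.trace • S - S * S).PosSemidef := by
  classical
  have hH := hS.1
  set ev := hH.eigenvalues with hev
  set U : Matrix (Fin n) (Fin n) ℝ := (hH.eigenvectorUnitary : Matrix (Fin n) (Fin n) ℝ) with hUdef
  have hU : star U * U = 1 := ((Unitary.mem_iff).1 hH.eigenvectorUnitary.2).1
  have hspec : S = U * diagonal ev * star U := by
    have := hH.spectral_theorem
    simpa [RCLike.ofReal_real_eq_id] using this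
  have hevnn : ∀ i, 0 ≤ ev i := hS.eigenvalues_nonneg
  have htr : S.trace = ∑ i, ev i := by rw [hspec, myConjTrace hU]
  have hSS : S * S = U * diagonal (fun i => ev i * ev i) * star U := by
    conv_lhs => rw [hspec]
    rw [myConjMul hU]
  have heq : S.trace • S - S * S
      = U * diagonal (fun i => S.trace * ev i - 1 * (ev i * ev i)) * star U := by
    calc S.trace • S - S * S
        = S.trace • (U * diagonal ev * star U)
            - 1 • (U * diagonal (fun i => ev i * ev i) * star U) := by
          rw [one_smul, ← hspec, ← hSS]
      _ = _ := myConjLin hU ev _ S.trace 1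
  rw [heq]
  refine myConjPsd _ fun i => ?_
  have h1 : ev i ≤ S.trace := by
    rw [htr]
    exact Finset.single_le_sum (fun j _ => hevnn j) (Finset.mem_univ i)
  nlinarith [hevnn i]

lemma myDiagAbs {n : ℕ} (A : Matrix (Fin n) (Fin n) ℝ) (i : Fin n) : |A i i| ≤ ‖A‖ := by
  have h1 : A i i ^ 2 ≤ (Aᵀ * A).trace := by
    have : A i i ^2 ≤ ∑ j, A j i * A j i := by
      have := Finset.single_le_sum (f := fun j => A j i * A j i)
        (fun j _ => mul_self_nonneg _) (Finset.mem_univ i)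
      simpa [sq] using this
    calc A i i ^ 2 ≤ ∑ j, A j i * A j i := this
      _ ≤ ∑ k, ∑ j, A j k * A j k := by
          exact Finset.single_le_sum (f := fun k => ∑ j, A j k * A j k)
            (fun k _ => Finset.sum_nonneg fun j _ => mul_self_nonneg _) (Finset.mem_univ i)
      _ = (Aᵀ * A).trace := by
          rw [Matrix.trace]
          exact Finset.sum_congr rfl fun k _ => by
            simp [Matrix.mul_apply, Matrix.diag]
  rw [← myNormSq] at h1
  nlinarith [abs_nonneg (A i i), norm_nonneg A, sq_abs (A i i)]

/-- The normal cone (in the ambient space `𝕊ⁿ` of symmetric matrices) of a set `D` of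
symmetric matrices at a point `x`. -/
def matNormalCone {n : ℕ} (D : Set (Matrix (Fin n) (Fin n) ℝ))
    (x : Matrix (Fin n) (Fin n) ℝ) : Set (Matrix (Fin n) (Fin n) ℝ) :=
  {H | H.IsSymm ∧ ∀ z ∈ D, Matrix.trace (Hᵀ * (z - x)) ≤ 0}

theorem stmt6 {n : ℕ} (X Sbar : Matrix (Fin n) (Fin n) ℝ)
    (hX : X.PosSemidef) (hS : Sbar.PosSemidef)
    (hXS : Matrix.trace (Xᵀ * Sbar) = 0) :
    ∃ κ > (0 : ℝ), ∃ U ∈ nhds Sbar, ∀ S : Matrix (Fin n) (Fin n) ℝ,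
      S.PosSemidef → S ∈ U →
        Matrix.trace (Xᵀ * (Sbar - S)) +
          κ * (Metric.infDist (-S)
            (matNormalCone {Y : Matrix (Fin n) (Fin n) ℝ | Y.PosSemidef} X)) ^ 2 ≤ 0 := by
  classical
  obtain ⟨l, hl, Q, hQpsd, hQQ, hQX, hXlQ⟩ := myExistsProj hX
  have hQsymm : Qᵀ = Q := by
    rw [← Matrix.conjTranspose_eq_transpose_of_trivial]; exact hQpsd.1
  have hXsymm : Xᵀ = X := by
    rw [← Matrix.conjTranspose_eq_transpose_of_trivial]; exact hX.1
  set T : ℝ := Sbar.trace + n + 1 with hTdef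
  have hT0 : 0 < T := by
    have := myPsdTraceNonneg hS
    have : (0:ℝ) ≤ (n:ℝ) := Nat.cast_nonneg n
    positivity
  refine ⟨l / (4 * T), by positivity, Metric.ball Sbar 1, Metric.ball_mem_nhds _ one_pos, ?_⟩
  intro S hSpsd hSU
  have hSsymm : Sᵀ = S := by
    rw [← Matrix.conjTranspose_eq_transpose_of_trivial]; exact hSpsd.1
  -- trace of S is bounded by T
  have htrS : S.trace ≤ T := by
    have h1 : S.trace - Sbar.trace = (S - Sbar).trace := by
      rw [Matrix.trace_sub]
    have h2 : (S - Sbar).trace ≤ (n:ℝ) * ‖S - Sbar‖ := by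
      rw [Matrix.trace]
      calc ∑ i, (S - Sbar).diag i ≤ ∑ _i : Fin n, ‖S - Sbar‖ := by
            refine Finset.sum_le_sum fun i _ => ?_
            exact le_trans (le_abs_self _) (myDiagAbs _ i)
        _ = (n:ℝ) * ‖S - Sbar‖ := by
            rw [Finset.sum_const]; simp [mul_comm]
    have h3 : ‖S - Sbar‖ ≤ 1 := by
      have := Metric.mem_ball.1 hSU
      rw [dist_eq_norm] at this
      linarith
    have h4 : (n:ℝ) * ‖S - Sbar‖ ≤ n := by
      nlinarith [Nat.cast_nonneg (α := ℝ) n, norm_nonneg (S - Sbar)]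
    rw [hTdef]
    linarith [h1, h2]
  -- the projection complement
  set P : Matrix (Fin n) (Fin n) ℝ := 1 - Q with hPdef
  have hPsymm : Pᵀ = P := by
    rw [hPdef, Matrix.transpose_sub, Matrix.transpose_one, hQsymm]
  have hPP : P * P = P := by
    rw [hPdef, Matrix.sub_mul, Matrix.one_mul, Matrix.mul_sub, Matrix.mul_one, hQQ]
    abel
  have hPX : P * X = 0 := by
    rw [hPdef, Matrix.sub_mul, Matrix.one_mul, hQX, sub_self]
  have hQQ' : ∀ M : Matrix (Fin n) (Fin n) ℝ, Q * (Q * M) = Q * M := fun M => by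
    rw [← Matrix.mul_assoc, hQQ]
  have hPP' : ∀ M : Matrix (Fin n) (Fin n) ℝ, P * (P * M) = P * M := fun M => by
    rw [← Matrix.mul_assoc, hPP]
  -- the candidate element of the normal cone
  have hPSPt : (P * S * P)ᵀ = P * S * P := by
    rw [Matrix.transpose_mul, Matrix.transpose_mul, hPsymm, hSsymm, Matrix.mul_assoc]
  have hPSP : (P * S * P).PosSemidef := by
    have h := hSpsd.mul_mul_conjTranspose_same P
    rwa [Matrix.conjTranspose_eq_transpose_of_trivial, hPsymm] at h
  have hPSPX : P * S * P * X = 0 := by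
    rw [Matrix.mul_assoc (P * S) P X, hPX, Matrix.mul_zero]
  have hmem : -(P * S * P) ∈ matNormalCone {Y : Matrix (Fin n) (Fin n) ℝ | Y.PosSemidef} X := by
    refine ⟨?_, ?_⟩
    · show (-(P * S * P))ᵀ = -(P * S * P)
      rw [Matrix.transpose_neg, hPSPt]
    · intro z hz
      have h4 : 0 ≤ ((P * S * P) * z).trace := myTraceMulNonneg hPSP hz
      have h5 : (-(P * S * P))ᵀ * (z - X) = -(P * S * P * z) + P * S * P * X := by
        rw [Matrix.transpose_neg, hPSPt, Matrix.neg_mul, Matrix.mul_sub]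
        abel
      rw [h5, hPSPX, Matrix.trace_add, Matrix.trace_neg, Matrix.trace_zero]
      linarith
  -- decomposition S - P*S*P = Q*S + P*S*Q
  have hE : S - P * S * P = Q * S + P * S * Q := by
    simp only [hPdef, Matrix.sub_mul, Matrix.mul_sub, Matrix.one_mul, Matrix.mul_one]
    abel
  have hd1 : Metric.infDist (-S)
      (matNormalCone {Y : Matrix (Fin n) (Fin n) ℝ | Y.PosSemidef} X)
        ≤ ‖Q * S + P * S * Q‖ := by
    have h := Metric.infDist_le_dist_of_mem (x := -S) hmem
    rw [dist_eq_norm] at h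
    have h6 : -S - -(P * S * P) = -(S - P * S * P) := by abel
    rwa [h6, norm_neg, hE] at h
  set d : ℝ := Metric.infDist (-S)
      (matNormalCone {Y : Matrix (Fin n) (Fin n) ℝ | Y.PosSemidef} X) with hddef
  have hd0 : 0 ≤ d := Metric.infDist_nonneg
  set b : ℝ := (S * S * Q).trace with hbdef
  have hQSsq : ‖Q * S‖ ^ 2 = b := by
    rw [myNormSq, Matrix.transpose_mul, hQsymm, hSsymm]
    have e1 : S * Q * (Q * S) = S * (Q * S) := by
      rw [Matrix.mul_assoc S Q (Q * S), hQQ' S]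
    rw [e1, ← Matrix.mul_assoc, hbdef]
    exact Matrix.trace_mul_cycle S Q S
  have hSQSQ : (0:ℝ) ≤ (S * Q * (S * Q)).trace := by
    have h0 : (0:ℝ) ≤ ‖Q * S * Q‖ ^ 2 := sq_nonneg _
    rw [myNormSq] at h0
    have ht : (Q * S * Q)ᵀ = Q * S * Q := by
      rw [Matrix.transpose_mul, Matrix.transpose_mul, hQsymm, hSsymm, Matrix.mul_assoc]
    rw [ht] at h0
    have e2 : (Q * S * Q) * (Q * S * Q) = Q * (S * (Q * (S * Q))) := by
      simp only [Matrix.mul_assoc, hQQ']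
    rw [e2, Matrix.trace_mul_comm] at h0
    have e3 : (S * (Q * (S * Q))) * Q = S * Q * (S * Q) := by
      simp only [Matrix.mul_assoc, hQQ]
    rwa [e3] at h0
  have hPSQsq : ‖P * S * Q‖ ^ 2 ≤ b := by
    rw [myNormSq]
    have ht : (P * S * Q)ᵀ = Q * (S * P) := by
      rw [Matrix.transpose_mul, Matrix.transpose_mul, hQsymm, hSsymm, hPsymm]
    rw [ht]
    have e4 : Q * (S * P) * (P * S * Q) = Q * (S * (P * (S * Q))) := by
      simp only [Matrix.mul_assoc, hPP']
    rw [e4, Matrix.trace_mul_comm]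
    have e5 : (S * (P * (S * Q))) * Q = S * (P * (S * Q)) := by
      simp only [Matrix.mul_assoc, hQQ]
    rw [e5]
    have e6 : S * (P * (S * Q)) = S * (S * Q) - S * (Q * (S * Q)) := by
      rw [hPdef, Matrix.sub_mul, Matrix.one_mul, Matrix.mul_sub]
    rw [e6, Matrix.trace_sub]
    have e7 : (S * (S * Q)).trace = b := by rw [hbdef, Matrix.mul_assoc]
    rw [e7, ← Matrix.mul_assoc S Q (S * Q)]
    linarith [hSQSQ]
  have hnormE : ‖Q * S + P * S * Q‖ ^ 2 ≤ 4 * b := by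
    have h1 := norm_add_le (Q * S) (P * S * Q)
    nlinarith [hQSsq, hPSQsq, norm_nonneg (Q * S), norm_nonneg (P * S * Q),
      norm_nonneg (Q * S + P * S * Q),
      sq_nonneg (‖Q * S‖ - ‖P * S * Q‖),
      mul_self_le_mul_self (norm_nonneg (Q * S + P * S * Q)) h1]
  have hdsq : d ^ 2 ≤ 4 * b := by
    nlinarith [hd1, hnormE, norm_nonneg (Q * S + P * S * Q)]
  have hQS0 : (0:ℝ) ≤ (Q * S).trace := myTraceMulNonneg hQpsd hSpsd
  have hbt : b ≤ S.trace * (Q * S).trace := by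
    have h := myTraceMulNonneg (mySqLe hSpsd) hQpsd
    have e9 : (S.trace • S - S * S) * Q = S.trace • (S * Q) - S * S * Q := by
      rw [Matrix.sub_mul, Matrix.smul_mul]
    rw [e9, Matrix.trace_sub, Matrix.trace_smul, Matrix.trace_mul_comm S Q,
      smul_eq_mul] at h
    rw [hbdef]
    linarith
  have hXS0 : l * (Q * S).trace ≤ (X * S).trace := by
    have h := myTraceMulNonneg hXlQ hSpsd
    have e11 : (X - l • Q) * S = X * S - l • (Q * S) := by
      rw [Matrix.sub_mul, Matrix.smul_mul]
    rw [e11, Matrix.trace_sub, Matrix.trace_smul, smul_eq_mul] at h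
    linarith
  have hfirst : (Xᵀ * (Sbar - S)).trace = -((X * S).trace) := by
    rw [Matrix.mul_sub, Matrix.trace_sub, hXS, hXsymm, zero_sub]
  rw [hfirst]
  have hkey : l * d ^ 2 ≤ 4 * (T * (X * S).trace) := by
    nlinarith [mul_le_mul_of_nonneg_left hdsq hl.le,
      mul_le_mul_of_nonneg_left hbt hl.le,
      mul_le_mul_of_nonneg_right htrS hQS0,
      mul_le_mul_of_nonneg_left hXS0 hT0.le,
      mul_le_mul_of_nonneg_left (mul_le_mul_of_nonneg_right htrS hQS0) hl.le,
      hl.le, hT0.le, hQS0]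
  have hfin : l / (4 * T) * d ^ 2 ≤ (X * S).trace := by
    rw [div_mul_eq_mul_div, div_le_iff₀ (by positivity : (0:ℝ) < 4 * T)]
    linarith [hkey]
  linarith
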